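/- Let S ∈ ℝ^{n×n} be an invertible matrix such that S A S⁻¹ = blockdiag(A_r, A_s) and C S⁻¹ = [C_r C_s], where A_r ∈ ℝ^{r×r} is invertible and A_s ∈ ℝ^{(n−r)×(n−r)} is nilpotent. Then (A,C,𝒜) is constructible if and only if (A_r, C_r, 𝒜) is observable; moreover (A,C,𝒜) is practically constructible if and only if (A_r, C_r, 𝒜) is practically observable. -/

import Mathlib

open Matrix Filter

/-- An automaton `𝒜 = (M, s)` with `N` nodes: transition matrix `M ∈ {0,1}^{N×N}`
and vector of node labels `s ∈ {0,1}^N`. -/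
structure Automaton (N : ℕ) where
  M : Matrix (Fin N) (Fin N) Bool
  s : Fin N → Bool

/-- `σ ∈ ℒ(𝒜)`: the data loss signal `σ` is admissible with respect to `𝒜`. -/
def Automaton.Admissible {N : ℕ} (𝒜 : Automaton N) (σ : ℕ → Bool) : Prop :=
  ∃ v : ℕ → Fin N, ∀ t : ℕ, 𝒜.M (v t) (v (t + 1)) = true ∧ σ t = 𝒜.s (v t)

/-- A finite word of length `r` generated by `𝒜` (only the first `r` letters of `w` matter). -/
def Automaton.AdmissibleWord {N : ℕ} (𝒜 : Automaton N) (r : ℕ) (w : ℕ → Bool) : Prop :=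
  ∃ v : ℕ → Fin N, (∀ t : ℕ, t + 1 < r → 𝒜.M (v t) (v (t + 1)) = true) ∧
    ∀ t : ℕ, t < r → w t = 𝒜.s (v t)

/-- The reverse automaton `𝒜ʳ = (Mᵀ, s)`. -/
def Automaton.rev {N : ℕ} (𝒜 : Automaton N) : Automaton N :=
  ⟨𝒜.M.transpose, 𝒜.s⟩

/-- Observability of the system `(A, C, 𝒜)`. -/
def Observable {N n p : ℕ} (A : Matrix (Fin n) (Fin n) ℝ) (C : Matrix (Fin p) (Fin n) ℝ)
    (𝒜 : Automaton N) : Prop :=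
  ∀ σ : ℕ → Bool, 𝒜.Admissible σ → ∀ x₀ : Fin n → ℝ,
    (∀ t : ℕ, σ t = true → (C * A ^ t).mulVec x₀ = 0) → x₀ = 0

/-- Practical observability of the system `(A, C, 𝒜)`. -/
def PracticallyObservable {N n p : ℕ} (A : Matrix (Fin n) (Fin n) ℝ)
    (C : Matrix (Fin p) (Fin n) ℝ) (𝒜 : Automaton N) : Prop :=
  ∃ T : ℕ, ∀ σ : ℕ → Bool, 𝒜.Admissible σ → ∀ x₀ : Fin n → ℝ,
    (∀ t : ℕ, t ≤ T → σ t = true → (C * A ^ t).mulVec x₀ = 0) → x₀ = 0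

/-- Constructibility of the system `(A, C, 𝒜)`. -/
def Constructible {N n p : ℕ} (A : Matrix (Fin n) (Fin n) ℝ) (C : Matrix (Fin p) (Fin n) ℝ)
    (𝒜 : Automaton N) : Prop :=
  ∀ σ : ℕ → Bool, 𝒜.Admissible σ → ∃ T : ℕ, ∀ x₀ : Fin n → ℝ,
    (∀ t : ℕ, t ≤ T → σ t = true → (C * A ^ t).mulVec x₀ = 0) → (A ^ T).mulVec x₀ = 0

/-- Practical constructibility of the system `(A, C, 𝒜)`. -/
def PracticallyConstructible {N n p : ℕ} (A : Matrix (Fin n) (Fin n) ℝ)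
    (C : Matrix (Fin p) (Fin n) ℝ) (𝒜 : Automaton N) : Prop :=
  ∃ T : ℕ, ∀ σ : ℕ → Bool, 𝒜.Admissible σ → ∀ x₀ : Fin n → ℝ,
    (∀ t : ℕ, t ≤ T → σ t = true → (C * A ^ t).mulVec x₀ = 0) → (A ^ T).mulVec x₀ = 0

/-- Detectability of the system `(A, C, 𝒜)`. -/
def Detectable {N n p : ℕ} (A : Matrix (Fin n) (Fin n) ℝ) (C : Matrix (Fin p) (Fin n) ℝ)
    (𝒜 : Automaton N) : Prop :=
  ∀ σ : ℕ → Bool, 𝒜.Admissible σ → ∀ x₀ : Fin n → ℝ,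
    (∀ t : ℕ, σ t = true → (C * A ^ t).mulVec x₀ = 0) →
      Tendsto (fun t : ℕ => (A ^ t).mulVec x₀) atTop (nhds 0)

/-- The observability matrix `O_σ(t) = [σ(0)C; σ(1)CA; ...; σ(t−1)CA^{t−1}]`
(blocks stacked vertically, block `i` is row-block `i`). -/
def obsMat {n p : ℕ} (A : Matrix (Fin n) (Fin n) ℝ) (C : Matrix (Fin p) (Fin n) ℝ)
    (σ : ℕ → Bool) (t : ℕ) : Matrix (Fin t × Fin p) (Fin n) ℝ :=
  fun ij k => if σ (ij.1 : ℕ) then (C * A ^ (ij.1 : ℕ)) ij.2 k else 0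

/-- State trajectory of the system `x(t+1) = A x(t) + σ(t) B u(t)`. -/
def traj {n m : ℕ} (A : Matrix (Fin n) (Fin n) ℝ) (B : Matrix (Fin n) (Fin m) ℝ)
    (σ : ℕ → Bool) (u : ℕ → Fin m → ℝ) (x₀ : Fin n → ℝ) : ℕ → Fin n → ℝ
  | 0 => x₀
  | t + 1 => A.mulVec (traj A B σ u x₀ t) + if σ t then B.mulVec (u t) else 0

/-- Controllability of the system `(A, B, 𝒜)`. -/
def Controllable {N n m : ℕ} (A : Matrix (Fin n) (Fin n) ℝ) (B : Matrix (Fin n) (Fin m) ℝ)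
    (𝒜 : Automaton N) : Prop :=
  ∀ σ : ℕ → Bool, 𝒜.Admissible σ → ∀ x₀ xf : Fin n → ℝ,
    ∃ u : ℕ → Fin m → ℝ, ∃ T : ℕ, traj A B σ u x₀ T = xf

/-- Reachability of the system `(A, B, 𝒜)`. -/
def Reachable {N n m : ℕ} (A : Matrix (Fin n) (Fin n) ℝ) (B : Matrix (Fin n) (Fin m) ℝ)
    (𝒜 : Automaton N) : Prop :=
  ∀ σ : ℕ → Bool, 𝒜.Admissible σ → ∀ xf : Fin n → ℝ,
    ∃ u : ℕ → Fin m → ℝ, ∃ T : ℕ, traj A B σ u 0 T = xf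

/-- 0-controllability of the system `(A, B, 𝒜)`. -/
def ZeroControllable {N n m : ℕ} (A : Matrix (Fin n) (Fin n) ℝ) (B : Matrix (Fin n) (Fin m) ℝ)
    (𝒜 : Automaton N) : Prop :=
  ∀ σ : ℕ → Bool, 𝒜.Admissible σ → ∀ x₀ : Fin n → ℝ,
    ∃ u : ℕ → Fin m → ℝ, ∃ T : ℕ, traj A B σ u x₀ T = 0

/-- Stabilizability of the system `(A, B, 𝒜)`. -/
def Stabilizable {N n m : ℕ} (A : Matrix (Fin n) (Fin n) ℝ) (B : Matrix (Fin n) (Fin m) ℝ)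
    (𝒜 : Automaton N) : Prop :=
  ∀ σ : ℕ → Bool, 𝒜.Admissible σ → ∀ x₀ : Fin n → ℝ,
    ∃ u : ℕ → Fin m → ℝ, Tendsto (fun t : ℕ => traj A B σ u x₀ t) atTop (nhds 0)

/-- Practical controllability of the system `(A, B, 𝒜)`. -/
def PracticallyControllable {N n m : ℕ} (A : Matrix (Fin n) (Fin n) ℝ)
    (B : Matrix (Fin n) (Fin m) ℝ) (𝒜 : Automaton N) : Prop :=
  ∃ T : ℕ, ∀ σ : ℕ → Bool, 𝒜.Admissible σ → ∀ x₀ xf : Fin n → ℝ,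
    ∃ u : ℕ → Fin m → ℝ, ∃ t : ℕ, t ≤ T ∧ traj A B σ u x₀ t = xf

/-- Practical reachability of the system `(A, B, 𝒜)`. -/
def PracticallyReachable {N n m : ℕ} (A : Matrix (Fin n) (Fin n) ℝ)
    (B : Matrix (Fin n) (Fin m) ℝ) (𝒜 : Automaton N) : Prop :=
  ∃ T : ℕ, ∀ σ : ℕ → Bool, 𝒜.Admissible σ → ∀ xf : Fin n → ℝ,
    ∃ u : ℕ → Fin m → ℝ, ∃ t : ℕ, t ≤ T ∧ traj A B σ u 0 t = xf

/-- Practical 0-controllability of the system `(A, B, 𝒜)`. -/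
def PracticallyZeroControllable {N n m : ℕ} (A : Matrix (Fin n) (Fin n) ℝ)
    (B : Matrix (Fin n) (Fin m) ℝ) (𝒜 : Automaton N) : Prop :=
  ∃ T : ℕ, ∀ σ : ℕ → Bool, 𝒜.Admissible σ → ∀ x₀ : Fin n → ℝ,
    ∃ u : ℕ → Fin m → ℝ, ∃ t : ℕ, t ≤ T ∧ traj A B σ u x₀ t = 0

/-- The reachability matrix `C_σ(t) = [σ(t−1)B, σ(t−2)AB, ..., σ(0)A^{t−1}B]`
(block-column `i` is `σ(t−1−i) Aⁱ B`). -/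
def reachMat {n m : ℕ} (A : Matrix (Fin n) (Fin n) ℝ) (B : Matrix (Fin n) (Fin m) ℝ)
    (σ : ℕ → Bool) (t : ℕ) : Matrix (Fin n) (Fin t × Fin m) ℝ :=
  fun k ij => if σ (t - 1 - (ij.1 : ℕ)) then (A ^ (ij.1 : ℕ) * B) k ij.2 else 0

/-- State trajectory of the system with varying delays
`x(t+1) = A x(t) + Σ_{t' ≤ t, t' + d(t') = t} B u(t')`. -/
def delayTraj {n m : ℕ} (A : Matrix (Fin n) (Fin n) ℝ) (B : Matrix (Fin n) (Fin m) ℝ)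
    (d : ℕ → ℕ) (u : ℕ → Fin m → ℝ) (x₀ : Fin n → ℝ) : ℕ → Fin n → ℝ
  | 0 => x₀
  | t + 1 => A.mulVec (delayTraj A B d u x₀ t) +
      ∑ t' ∈ Finset.range (t + 1), if t' + d t' = t then B.mulVec (u t') else 0

/-- Controllability of the system with varying delays `(A, B, 𝒟)`. -/
def DelayControllable {n m : ℕ} (A : Matrix (Fin n) (Fin n) ℝ) (B : Matrix (Fin n) (Fin m) ℝ)
    (𝒟 : Finset ℕ) : Prop :=
  ∀ d : ℕ → ℕ, (∀ t : ℕ, d t ∈ 𝒟) → ∀ x₀ xf : Fin n → ℝ,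
    ∃ u : ℕ → Fin m → ℝ, ∃ T : ℕ, delayTraj A B d u x₀ T = xf

/-- The controllability matrix `C̄_d(t)` of a system with varying delays: its `i`-th
block column (here indexed by `j = i - 1 : Fin t`) is `A^{t−i−d(i−1)} B` when
`i + d(i−1) ≤ t`, and the zero block otherwise. -/
def delayCtrbMat {n m : ℕ} (A : Matrix (Fin n) (Fin n) ℝ) (B : Matrix (Fin n) (Fin m) ℝ)
    (d : ℕ → ℕ) (t : ℕ) : Matrix (Fin n) (Fin t × Fin m) ℝ :=
  fun k jl => if (jl.1 : ℕ) + 1 + d (jl.1 : ℕ) ≤ t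
    then (A ^ (t - ((jl.1 : ℕ) + 1) - d (jl.1 : ℕ)) * B) k jl.2 else 0

-- The actuation signal `τ_d` of a delay signal `d`: `τ_d(t) = 1` iff there is
-- `t'` with `t' + d(t') = t`.
open Classical in
noncomputable def actuation (d : ℕ → ℕ) (t : ℕ) : Bool :=
  if ∃ t' : ℕ, t' + d t' = t then true else false


section AuxLemmas

private lemma conj_pow' {n : ℕ} (S A : Matrix (Fin n) (Fin n) ℝ) (hS : IsUnit S.det) (t : ℕ) :
    (S * A * S⁻¹) ^ t = S * A ^ t * S⁻¹ := by
  induction t with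
  | zero => simp [Matrix.mul_nonsing_inv S hS]
  | succ t ih =>
    rw [pow_succ, ih, pow_succ]
    calc S * A ^ t * S⁻¹ * (S * A * S⁻¹)
        = S * A ^ t * (S⁻¹ * (S * (A * S⁻¹))) := by
          simp only [Matrix.mul_assoc]
      _ = S * A ^ t * (A * S⁻¹) := by
          rw [Matrix.nonsing_inv_mul_cancel_left _ _ hS]
      _ = S * (A ^ t * A) * S⁻¹ := by simp only [Matrix.mul_assoc]

private lemma fromBlocks_diag_pow {r k : ℕ} (Ar : Matrix (Fin r) (Fin r) ℝ)
    (As : Matrix (Fin k) (Fin k) ℝ) (t : ℕ) :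
    (Matrix.fromBlocks Ar 0 0 As) ^ t = Matrix.fromBlocks (Ar ^ t) 0 0 (As ^ t) := by
  induction t with
  | zero => simp [Matrix.fromBlocks_one]
  | succ t ih =>
    rw [pow_succ, ih, Matrix.fromBlocks_multiply, pow_succ, pow_succ]
    simp

private lemma exists_min_nat (g : ℕ → ℕ) : ∃ T0 : ℕ, ∀ T, g T0 ≤ g T := by
  classical
  have hP : ∃ v : ℕ, ∃ T, g T = v := ⟨g 0, 0, rfl⟩
  obtain ⟨T0, hT0⟩ := Nat.find_spec hP
  refine ⟨T0, fun T => ?_⟩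
  by_contra h
  exact Nat.find_min hP (hT0 ▸ Nat.lt_of_not_le h) ⟨T, rfl⟩

private lemma finite_obs {r p : ℕ} (Ar : Matrix (Fin r) (Fin r) ℝ)
    (Cr : Matrix (Fin p) (Fin r) ℝ) (σ : ℕ → Bool)
    (h : ∀ y : Fin r → ℝ, (∀ t, σ t = true → (Cr * Ar ^ t).mulVec y = 0) → y = 0) :
    ∃ T : ℕ, ∀ y : Fin r → ℝ,
      (∀ t, t ≤ T → σ t = true → (Cr * Ar ^ t).mulVec y = 0) → y = 0 := by
  classical
  set W : ℕ → Submodule ℝ (Fin r → ℝ) := fun T =>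
    ⨅ (t : ℕ) (_ : t ≤ T) (_ : σ t = true), LinearMap.ker ((Cr * Ar ^ t).mulVecLin) with hW
  have hmem : ∀ T (y : Fin r → ℝ), y ∈ W T ↔
      (∀ t, t ≤ T → σ t = true → (Cr * Ar ^ t).mulVec y = 0) := by
    intro T y
    simp [hW, Submodule.mem_iInf, LinearMap.mem_ker]
  have hanti : ∀ {T T' : ℕ}, T ≤ T' → W T' ≤ W T := by
    intro T T' hTT' y hy
    rw [hmem] at hy ⊢
    exact fun t ht hσ => hy t (ht.trans hTT') hσ
  obtain ⟨T0, hT0⟩ := exists_min_nat (fun T => Module.finrank ℝ (W T))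
  refine ⟨T0, fun y hy => ?_⟩
  have hyW : y ∈ W T0 := (hmem T0 y).2 hy
  refine h y fun t hσ => ?_
  have hle : W (max t T0) ≤ W T0 := hanti (le_max_right _ _)
  have heq : W (max t T0) = W T0 :=
    Submodule.eq_of_le_of_finrank_le hle (hT0 (max t T0))
  have hyW' : y ∈ W (max t T0) := heq ▸ hyW
  exact (hmem _ y).1 hyW' t (le_max_left _ _) hσ

end AuxLemmas

/-- With `S A S⁻¹ = blockdiag(A_r, A_s)`, `C S⁻¹ = [C_r  C_s]`, `A_r` invertible and
`A_s` nilpotent: `(A,C,𝒜)` is (practically) constructible iff `(A_r,C_r,𝒜)` is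
(practically) observable. -/
theorem constructible_iff_regular_part_observable {N r k p : ℕ}
    (A : Matrix (Fin (r + k)) (Fin (r + k)) ℝ) (C : Matrix (Fin p) (Fin (r + k)) ℝ)
    (𝒜 : Automaton N) (S : Matrix (Fin (r + k)) (Fin (r + k)) ℝ) (hS : IsUnit S.det)
    (Ar : Matrix (Fin r) (Fin r) ℝ) (As : Matrix (Fin k) (Fin k) ℝ)
    (Cr : Matrix (Fin p) (Fin r) ℝ) (Cs : Matrix (Fin p) (Fin k) ℝ)
    (hA : S * A * S⁻¹ =
      (Matrix.fromBlocks Ar 0 0 As).submatrix finSumFinEquiv.symm finSumFinEquiv.symm)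
    (hC : C * S⁻¹ = (Matrix.fromCols Cr Cs).submatrix id finSumFinEquiv.symm)
    (hAr : IsUnit Ar.det) (hAs : IsNilpotent As) :
    (Constructible A C 𝒜 ↔ Observable Ar Cr 𝒜) ∧
    (PracticallyConstructible A C 𝒜 ↔ PracticallyObservable Ar Cr 𝒜) := by
  classical
  obtain ⟨m, hm⟩ := hAs
  set e : Fin r ⊕ Fin k ≃ Fin (r + k) := finSumFinEquiv with he
  -- basic cancellation facts
  have hSi : S⁻¹ * S = 1 := Matrix.nonsing_inv_mul S hS
  have hSS : S * S⁻¹ = 1 := Matrix.mul_nonsing_inv S hS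
  have hSinj : ∀ v : Fin (r + k) → ℝ, S.mulVec v = 0 → v = 0 := by
    intro v hv
    have := congrArg (S⁻¹.mulVec) hv
    rwa [Matrix.mulVec_mulVec, hSi, Matrix.one_mulVec, Matrix.mulVec_zero] at this
  have hArinj : ∀ (T : ℕ) (y : Fin r → ℝ), (Ar ^ T).mulVec y = 0 → y = 0 := by
    intro T y hy
    have hdet : IsUnit (Ar ^ T).det := by rw [Matrix.det_pow]; exact hAr.pow T
    have := congrArg ((Ar ^ T)⁻¹.mulVec) hy
    rwa [Matrix.mulVec_mulVec, Matrix.nonsing_inv_mul _ hdet, Matrix.one_mulVec,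
      Matrix.mulVec_zero] at this
  have hAsT : ∀ T : ℕ, m ≤ T → As ^ T = 0 := by
    intro T hT
    rw [← Nat.sub_add_cancel hT, pow_add, hm, mul_zero]
  -- powers of the block diagonal form
  have hDpow : ∀ t : ℕ,
      ((Matrix.fromBlocks Ar 0 0 As).submatrix e.symm e.symm) ^ t =
        (Matrix.fromBlocks (Ar ^ t) 0 0 (As ^ t)).submatrix e.symm e.symm := by
    intro t
    induction t with
    | zero => simp [Matrix.fromBlocks_one]
    | succ t ih =>
      rw [pow_succ, ih, Matrix.submatrix_mul_equiv, Matrix.fromBlocks_multiply, pow_succ,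
        pow_succ]
      simp
  have hconj : ∀ t : ℕ, S * A ^ t * S⁻¹ =
      (Matrix.fromBlocks (Ar ^ t) 0 0 (As ^ t)).submatrix e.symm e.symm := by
    intro t
    rw [← conj_pow' S A hS, hA, hDpow]
  have hSA : ∀ t : ℕ, S * A ^ t =
      ((Matrix.fromBlocks (Ar ^ t) 0 0 (As ^ t)).submatrix e.symm e.symm) * S := by
    intro t
    rw [← hconj t, Matrix.nonsing_inv_mul_cancel_right _ _ hS]
  -- the two coordinate functions
  set yx : (Fin (r + k) → ℝ) → (Fin r → ℝ) :=
    fun x₀ i => S.mulVec x₀ (e (Sum.inl i)) with hyx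
  set zx : (Fin (r + k) → ℝ) → (Fin k → ℝ) :=
    fun x₀ j => S.mulVec x₀ (e (Sum.inr j)) with hzx
  have hwe : ∀ x₀ : Fin (r + k) → ℝ, (S.mulVec x₀) ∘ e = Sum.elim (yx x₀) (zx x₀) := by
    intro x₀; funext s; cases s <;> rfl
  -- block action on states
  have hblk : ∀ (x₀ : Fin (r + k) → ℝ) (t : ℕ),
      S.mulVec ((A ^ t).mulVec x₀) =
        (Sum.elim ((Ar ^ t).mulVec (yx x₀)) ((As ^ t).mulVec (zx x₀))) ∘ e.symm := by
    intro x₀ t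
    rw [Matrix.mulVec_mulVec, hSA t, ← Matrix.mulVec_mulVec,
      Matrix.submatrix_mulVec_equiv _ _ _ e.symm]
    simp only [Equiv.symm_symm]
    rw [hwe x₀, Matrix.fromBlocks_mulVec]
    simp
  -- output decomposition
  have hCAv : ∀ (x₀ : Fin (r + k) → ℝ) (t : ℕ),
      (C * A ^ t).mulVec x₀ =
        (Cr * Ar ^ t).mulVec (yx x₀) + (Cs * As ^ t).mulVec (zx x₀) := by
    intro x₀ t
    have h1 : C * A ^ t = (C * S⁻¹) * (S * A ^ t) := by
      rw [Matrix.mul_assoc, Matrix.nonsing_inv_mul_cancel_left _ _ hS]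
    rw [h1, hC, hSA t, ← Matrix.mul_assoc, Matrix.submatrix_mul_equiv,
      Matrix.fromCols_mul_fromBlocks, ← Matrix.mulVec_mulVec,
      Matrix.submatrix_mulVec_equiv _ _ _ e.symm]
    simp only [Equiv.symm_symm]
    rw [hwe x₀]
    simp
  -- surjectivity of the coordinates
  have hsurj : ∀ (y : Fin r → ℝ) (z : Fin k → ℝ),
      ∃ x₀ : Fin (r + k) → ℝ, yx x₀ = y ∧ zx x₀ = z := by
    intro y z
    refine ⟨S⁻¹.mulVec (fun i => Sum.elim y z (e.symm i)), ?_, ?_⟩ <;>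
    · funext i
      simp only [hyx, hzx, Matrix.mulVec_mulVec, hSS, Matrix.one_mulVec]
      simp
  -- admissibility of shifted signals
  have hshift : ∀ σ : ℕ → Bool, 𝒜.Admissible σ → 𝒜.Admissible (fun t => σ (t + m)) := by
    rintro σ ⟨v, hv⟩
    refine ⟨fun t => v (t + m), fun t => ⟨?_, (hv (t + m)).2⟩⟩
    have := (hv (t + m)).1
    rwa [show t + m + 1 = t + 1 + m from by omega] at this
  -- forward direction core
  have fwd : ∀ (T : ℕ) (σ : ℕ → Bool),
      (∀ x₀ : Fin (r + k) → ℝ,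
        (∀ t, t ≤ T → σ t = true → (C * A ^ t).mulVec x₀ = 0) → (A ^ T).mulVec x₀ = 0) →
      ∀ y : Fin r → ℝ,
        (∀ t, t ≤ T → σ t = true → (Cr * Ar ^ t).mulVec y = 0) → y = 0 := by
    intro T σ hcon y hy
    obtain ⟨x₀, hy0, hz0⟩ := hsurj y 0
    have hx : (A ^ T).mulVec x₀ = 0 := by
      refine hcon x₀ fun t ht hσ => ?_
      rw [hCAv x₀ t, hy0, hz0, Matrix.mulVec_zero, add_zero]
      exact hy t ht hσ
    have h0 := congrArg S.mulVec hx
    rw [hblk x₀ T, Matrix.mulVec_zero] at h0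
    refine hArinj T y ?_
    funext i
    have := congrFun h0 (e (Sum.inl i))
    simpa [hy0] using this
  -- backward direction core
  have bwd : ∀ (σ : ℕ → Bool) (T0 : ℕ),
      (∀ y : Fin r → ℝ,
        (∀ t, t ≤ T0 → σ (t + m) = true → (Cr * Ar ^ t).mulVec y = 0) → y = 0) →
      ∀ x₀ : Fin (r + k) → ℝ,
        (∀ t, t ≤ T0 + m → σ t = true → (C * A ^ t).mulVec x₀ = 0) →
          (A ^ (T0 + m)).mulVec x₀ = 0 := by
    intro σ T0 hT0 x₀ H
    have hy0 : (Ar ^ m).mulVec (yx x₀) = 0 := by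
      refine hT0 ((Ar ^ m).mulVec (yx x₀)) fun t ht hσ => ?_
      have h1 := H (t + m) (by omega) hσ
      rw [hCAv x₀ (t + m), pow_add As t m, hm, mul_zero, Matrix.mul_zero,
        Matrix.zero_mulVec, add_zero] at h1
      rw [Matrix.mulVec_mulVec, Matrix.mul_assoc, ← pow_add]
      exact h1
    have hy : yx x₀ = 0 := hArinj m _ hy0
    refine hSinj _ ?_
    rw [hblk x₀ (T0 + m), hy, hAsT (T0 + m) (by omega), Matrix.mulVec_zero,
      Matrix.zero_mulVec]
    funext i
    simp only [Function.comp_apply]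
    cases e.symm i <;> simp
  constructor
  · constructor
    · intro hcon σ hσ y hy
      obtain ⟨T, hT⟩ := hcon σ hσ
      exact fwd T σ hT y fun t _ ht => hy t ht
    · intro hobs σ hσ
      obtain ⟨T0, hT0⟩ := finite_obs Ar Cr (fun t => σ (t + m))
        (hobs (fun t => σ (t + m)) (hshift σ hσ))
      exact ⟨T0 + m, bwd σ T0 hT0⟩
  · constructor
    · rintro ⟨T, hT⟩
      exact ⟨T, fun σ hσ => fwd T σ (hT σ hσ)⟩
    · rintro ⟨T0, hT0⟩
      exact ⟨T0 + m, fun σ hσ =>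
        bwd σ T0 fun y hy => hT0 (fun t => σ (t + m)) (hshift σ hσ) y hy⟩
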